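/- Let m ≥ 1 and n > m be integers, let C > 0 and σ > 0 be constants, and let g : [0, ∞) → ℝ be non-decreasing with g(ζ) > 0 for all ζ > 0. Suppose (E_j)_{j ≥ 0} is a non-decreasing sequence of positive real numbers such that E_{j+1} − E_j ≥ C · 2^{jn} · g( σ · 2^{−j(n−m)} E_j ) for all j ≥ 0 and such that 2^{−j(n−m)} E_j → 0 as j → ∞. Then ∫_0^1 g(r) / r^{1 + n/(n−m)} dr < ∞. -/

import Mathlib

open MeasureTheory Set Filter Topology

lemma bern_aux {q t : ℝ} (hq : 1 < q) (ht : 1 ≤ t) :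
    (q - 1) * (t - 1) ≤ t ^ q - t := by
  have h := one_add_mul_self_le_rpow_one_add (s := t - 1) (by linarith) (le_of_lt hq)
  have h2 : (1 : ℝ) + (t - 1) = t := by ring
  rw [h2] at h
  nlinarith

lemma key_ineq {q x y : ℝ} (hq : 1 < q) (hx : 0 < x) (hxy : x ≤ y) :
    (y - x) * y ^ (-q) ≤ (x ^ (1 - q) - y ^ (1 - q)) / (q - 1) := by
  have hy : 0 < y := lt_of_lt_of_le hx hxy
  set t : ℝ := y / x with htdef
  have ht1 : 1 ≤ t := (one_le_div hx).mpr hxy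
  have ht0 : 0 < t := lt_of_lt_of_le one_pos ht1
  have hyx : y = x * t := by rw [htdef]; field_simp
  have hb := bern_aux hq ht1
  have hyq : y ^ (-q) = x ^ (-q) * t ^ (-q) := by
    rw [hyx, Real.mul_rpow hx.le ht0.le]
  have hy1q : y ^ (1 - q) = x ^ (1 - q) * t ^ (1 - q) := by
    rw [hyx, Real.mul_rpow hx.le ht0.le]
  have htq_pos : 0 < t ^ q := Real.rpow_pos_of_pos ht0 q
  have htnq : t ^ (-q) = (t ^ q)⁻¹ := by rw [Real.rpow_neg ht0.le]
  have ht1q : t ^ (1 - q) = t / t ^ q := by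
    rw [eq_div_iff (ne_of_gt htq_pos), ← Real.rpow_add ht0]
    ring_nf
    exact Real.rpow_one t
  have hx1q : x ^ (1 - q) = x * x ^ (-q) := by
    rw [show (1:ℝ) - q = 1 + (-q) by ring, Real.rpow_add hx, Real.rpow_one]
  have hxnq : 0 < x ^ (-q) := Real.rpow_pos_of_pos hx _
  rw [hyq, hy1q, hyx, hx1q, htnq, ht1q, le_div_iff₀ (by linarith : (0:ℝ) < q - 1)]
  have hfac := mul_le_mul_of_nonneg_left hb (le_of_lt (mul_pos hx hxnq))
  rw [← mul_le_mul_iff_of_pos_right htq_pos]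
  have hne : t ^ q ≠ 0 := ne_of_gt htq_pos
  field_simp
  nlinarith [hfac, htq_pos]

/-- The discrete iteration argument in the proof of Theorem 2.1: if a non-decreasing
positive sequence `(E_j)` satisfies `E_{j+1} - E_j ≥ C 2^{jn} g (σ 2^{-j(n-m)} E_j)` and
`2^{-j(n-m)} E_j → 0`, then the Dini integral `∫_0^1 g(r) / r^{1 + n/(n-m)} dr` is finite. -/
theorem dini_integral_finite_of_iteration (m n : ℕ) (hm : 1 ≤ m) (hmn : m < n)
    (C σ : ℝ) (hC : 0 < C) (hσ : 0 < σ)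
    (g : ℝ → ℝ) (hg_mono : MonotoneOn g (Ici 0)) (hg_pos : ∀ ζ > 0, 0 < g ζ)
    (E : ℕ → ℝ) (hE_pos : ∀ j, 0 < E j) (hE_mono : Monotone E)
    (hrec : ∀ j : ℕ,
      C * 2 ^ (j * n) * g (σ * (2 : ℝ) ^ (-(j : ℤ) * ((n : ℤ) - (m : ℤ))) * E j) ≤
        E (j + 1) - E j)
    (hlim : Tendsto (fun j : ℕ => (2 : ℝ) ^ (-(j : ℤ) * ((n : ℤ) - (m : ℤ))) * E j)
      atTop (𝓝 0)) :
    ∫⁻ r in Ioo (0 : ℝ) 1,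
      ENNReal.ofReal (g r / r ^ (1 + (n : ℝ) / ((n : ℝ) - (m : ℝ)))) < ⊤ := by
  have hmr : (1:ℝ) ≤ (m:ℝ) := by exact_mod_cast hm
  have hmnr : (m:ℝ) < (n:ℝ) := by exact_mod_cast hmn
  set ν : ℝ := (n:ℝ) - (m:ℝ) with hνdef
  have hν : 0 < ν := by rw [hνdef]; linarith
  set q : ℝ := (n:ℝ) / ν with hqdef
  have hq1 : 1 < q := by rw [hqdef, lt_div_iff₀ hν, hνdef]; linarith
  have hq0 : 0 < q := lt_trans one_pos hq1
  set a : ℕ → ℝ := fun j : ℕ => (2 : ℝ) ^ (-(j : ℤ) * ((n : ℤ) - (m : ℤ))) * E j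
    with hadef
  have ha_pos : ∀ j, 0 < a j := fun j =>
    mul_pos (zpow_pos two_pos _) (hE_pos j)
  -- the recurrence, rephrased
  have hrec' : ∀ j : ℕ, g (σ * a j) ≤ (E (j+1) - E j) / (C * 2 ^ (j*n)) := by
    intro j
    have hpos : (0:ℝ) < C * 2 ^ (j*n) := by positivity
    rw [le_div_iff₀ hpos, mul_comm]
    have h := hrec j
    rw [mul_assoc σ _ (E j)] at h
    exact h
  -- comparability of consecutive a's
  have hstep : ∀ k : ℕ, a k ≤ 2 ^ ((n:ℤ) - (m:ℤ)) * a (k+1) := by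
    intro k
    have hz : (2:ℝ) ^ ((n:ℤ) - (m:ℤ)) * (2:ℝ) ^ (-((k+1:ℕ) : ℤ) * ((n:ℤ) - (m:ℤ)))
        = (2:ℝ) ^ (-(k : ℤ) * ((n:ℤ) - (m:ℤ))) := by
      rw [← zpow_add₀ (two_ne_zero)]
      congr 1
      push_cast
      ring
    simp only [hadef]
    rw [← mul_assoc, hz]
    exact mul_le_mul_of_nonneg_left (hE_mono (Nat.le_succ k))
      (le_of_lt (zpow_pos two_pos _))
  -- a(k+1)^(-q) in terms of E(k+1)
  have hanq : ∀ k : ℕ, (a (k+1)) ^ (-q) = 2 ^ ((k+1)*n) * (E (k+1)) ^ (-q) := by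
    intro k
    have h2 : ((2:ℝ) ^ (-((k+1:ℕ) : ℤ) * ((n:ℤ) - (m:ℤ)))) ^ (-q)
        = (2:ℝ) ^ ((k+1)*n) := by
      rw [← Real.rpow_intCast 2 (-((k+1:ℕ) : ℤ) * ((n:ℤ) - (m:ℤ))),
        ← Real.rpow_natCast 2 ((k+1)*n), ← Real.rpow_mul (by norm_num : (0:ℝ) ≤ 2)]
      congr 1
      push_cast
      rw [hqdef, hνdef]
      have hne : (n:ℝ) - (m:ℝ) ≠ 0 := by linarith
      field_simp
    simp only [hadef]
    rw [Real.mul_rpow (le_of_lt (zpow_pos two_pos _)) (hE_pos _).le, h2]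
  -- limit of σ * a j
  have halim : Tendsto (fun j : ℕ => σ * a j) atTop (𝓝 0) := by
    have h := hlim.const_mul σ
    rw [mul_zero] at h
    exact h
  set δ : ℝ := min (σ * a 0) 1 with hδdef
  have hδ : 0 < δ := lt_min (mul_pos hσ (ha_pos 0)) one_pos
  -- the cover
  have hcover : Ioo (0:ℝ) 1 ⊆
      (⋃ k : ℕ, Ioc (σ * a (k+1)) (σ * a k)) ∪ Ico δ 1 := by
    intro r hr
    by_cases hrδ : r < δ
    · left
      have hex : ∃ j, σ * a j < r := (halim.eventually_lt_const hr.1).exists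
      have h0 : ¬ (σ * a 0 < r) :=
        not_lt.mpr (le_trans (le_of_lt hrδ) (min_le_left _ _))
      have hk0 : Nat.find hex ≠ 0 := fun h => h0 (h ▸ Nat.find_spec hex)
      obtain ⟨k', hk'⟩ : ∃ k', Nat.find hex = k' + 1 :=
        ⟨Nat.find hex - 1, (Nat.succ_pred_eq_of_pos (Nat.pos_of_ne_zero hk0)).symm⟩
      refine mem_iUnion.mpr ⟨k', ?_, ?_⟩
      · have := Nat.find_spec hex
        rw [hk'] at this
        exact this
      · exact not_lt.mp (Nat.find_min hex (hk' ▸ Nat.lt_succ_self k'))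
    · right
      exact ⟨not_lt.mp hrδ, hr.2⟩
  set f : ℝ → ENNReal := fun r => ENNReal.ofReal (g r / r ^ (1 + q)) with hfdef
  -- bound on the outer piece
  have houter : ∫⁻ r in Ico δ 1, f r
      ≤ ENNReal.ofReal (g 1 / δ ^ (1 + q)) * volume (Ico δ 1) := by
    calc ∫⁻ r in Ico δ 1, f r
        ≤ ∫⁻ _ in Ico δ 1, ENNReal.ofReal (g 1 / δ ^ (1 + q)) := by
          refine setLIntegral_mono' measurableSet_Ico (fun r hr => ?_)
          refine ENNReal.ofReal_le_ofReal ?_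
          have hr0 : 0 < r := lt_of_lt_of_le hδ hr.1
          refine div_le_div₀ (hg_pos 1 one_pos).le
            (hg_mono hr0.le (mem_Ici.mpr zero_le_one) hr.2.le)
            (Real.rpow_pos_of_pos hδ _)
            (Real.rpow_le_rpow hδ.le hr.1 (by linarith))
      _ = ENNReal.ofReal (g 1 / δ ^ (1 + q)) * volume (Ico δ 1) :=
          setLIntegral_const _ _
  -- now the pieces
  set P : ℕ → ℝ := fun k => (E k) ^ (1 - q) with hPdef
  set K : ℝ := (2:ℝ) ^ ((n:ℤ) - (m:ℤ)) * (σ ^ q)⁻¹ / C * 2 ^ n / (q - 1) with hKdef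
  have hK0 : 0 ≤ K := by
    rw [hKdef]
    have hσq : (0:ℝ) < σ ^ q := Real.rpow_pos_of_pos hσ q
    exact div_nonneg (by positivity) (by linarith)
  have hP_nonneg : ∀ k, 0 ≤ P k := fun k => (Real.rpow_pos_of_pos (hE_pos k) _).le
  have hP_anti : ∀ k, P (k+1) ≤ P k := fun k =>
    Real.rpow_le_rpow_of_nonpos (hE_pos k) (hE_mono (Nat.le_succ k)) (by linarith)
  -- per-piece real bound
  have hreal : ∀ k : ℕ,
      g (σ * a k) / (σ * a (k+1)) ^ (1 + q) * (σ * a k) ≤ K * (P k - P (k+1)) := by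
    intro k
    have ha1 : 0 < a (k+1) := ha_pos (k+1)
    have ha0 : 0 < a k := ha_pos k
    have hA : 0 < σ * a (k+1) := mul_pos hσ ha1
    have hApow : 0 < (σ * a (k+1)) ^ (1 + q) := Real.rpow_pos_of_pos hA _
    have hG0 : 0 < g (σ * a k) := hg_pos _ (mul_pos hσ ha0)
    have hz0 : (0:ℝ) < (2:ℝ) ^ ((n:ℤ) - (m:ℤ)) := zpow_pos two_pos _
    have hσq : (0:ℝ) < σ ^ q := Real.rpow_pos_of_pos hσ q
    have ha1q : (0:ℝ) < (a (k+1)) ^ q := Real.rpow_pos_of_pos ha1 q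
    have step1 : g (σ * a k) / (σ * a (k+1)) ^ (1 + q) * (σ * a k)
        ≤ g (σ * a k) / (σ * a (k+1)) ^ (1 + q)
            * (σ * ((2:ℝ) ^ ((n:ℤ) - (m:ℤ)) * a (k+1))) := by
      refine mul_le_mul_of_nonneg_left ?_ (by positivity)
      exact mul_le_mul_of_nonneg_left (hstep k) hσ.le
    have hA1q : (σ * a (k+1)) ^ (1 + q)
        = σ * a (k+1) * (σ ^ q * (a (k+1)) ^ q) := by
      rw [Real.rpow_add hA, Real.rpow_one, Real.mul_rpow hσ.le ha1.le]
    have step2 : g (σ * a k) / (σ * a (k+1)) ^ (1 + q)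
            * (σ * ((2:ℝ) ^ ((n:ℤ) - (m:ℤ)) * a (k+1)))
        = g (σ * a k) * ((2:ℝ) ^ ((n:ℤ) - (m:ℤ)) * (σ ^ q)⁻¹ * ((a (k+1)) ^ q)⁻¹) := by
      rw [hA1q]
      field_simp
    have hinv : ((a (k+1)) ^ q)⁻¹ = 2 ^ ((k+1)*n) * (E (k+1)) ^ (-q) := by
      rw [← hanq k, Real.rpow_neg ha1.le]
    have hEq : (0:ℝ) < (E (k+1)) ^ (-q) := Real.rpow_pos_of_pos (hE_pos _) _
    have step3 : g (σ * a k) * ((2:ℝ) ^ ((n:ℤ) - (m:ℤ)) * (σ ^ q)⁻¹ * ((a (k+1)) ^ q)⁻¹)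
        ≤ (E (k+1) - E k) / (C * 2 ^ (k*n))
            * ((2:ℝ) ^ ((n:ℤ) - (m:ℤ)) * (σ ^ q)⁻¹ * (2 ^ ((k+1)*n) * (E (k+1)) ^ (-q))) := by
      rw [hinv]
      refine mul_le_mul_of_nonneg_right (hrec' k) (by positivity)
    have step4 : (E (k+1) - E k) / (C * 2 ^ (k*n))
            * ((2:ℝ) ^ ((n:ℤ) - (m:ℤ)) * (σ ^ q)⁻¹ * (2 ^ ((k+1)*n) * (E (k+1)) ^ (-q)))
        = ((2:ℝ) ^ ((n:ℤ) - (m:ℤ)) * (σ ^ q)⁻¹ / C * 2 ^ n)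
            * ((E (k+1) - E k) * (E (k+1)) ^ (-q)) := by
      have hpow : (2:ℝ) ^ ((k+1)*n) = 2 ^ (k*n) * 2 ^ n := by
        rw [← pow_add]; congr 1; ring
      rw [hpow]
      have h2kn : (0:ℝ) < 2 ^ (k*n) := by positivity
      field_simp
    have step5 : (E (k+1) - E k) * (E (k+1)) ^ (-q) ≤ (P k - P (k+1)) / (q - 1) :=
      key_ineq hq1 (hE_pos k) (hE_mono (Nat.le_succ k))
    have hc0 : (0:ℝ) ≤ (2:ℝ) ^ ((n:ℤ) - (m:ℤ)) * (σ ^ q)⁻¹ / C * 2 ^ n := by positivity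
    calc g (σ * a k) / (σ * a (k+1)) ^ (1 + q) * (σ * a k)
        ≤ g (σ * a k) * ((2:ℝ) ^ ((n:ℤ) - (m:ℤ)) * (σ ^ q)⁻¹ * ((a (k+1)) ^ q)⁻¹) := by
          rw [← step2]; exact step1
      _ ≤ (E (k+1) - E k) / (C * 2 ^ (k*n))
            * ((2:ℝ) ^ ((n:ℤ) - (m:ℤ)) * (σ ^ q)⁻¹ * (2 ^ ((k+1)*n) * (E (k+1)) ^ (-q))) :=
          step3
      _ = ((2:ℝ) ^ ((n:ℤ) - (m:ℤ)) * (σ ^ q)⁻¹ / C * 2 ^ n)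
            * ((E (k+1) - E k) * (E (k+1)) ^ (-q)) := step4
      _ ≤ ((2:ℝ) ^ ((n:ℤ) - (m:ℤ)) * (σ ^ q)⁻¹ / C * 2 ^ n) * ((P k - P (k+1)) / (q - 1)) :=
          mul_le_mul_of_nonneg_left step5 hc0
      _ = K * (P k - P (k+1)) := by rw [hKdef]; ring
  -- per-piece lintegral bound
  have hpiece : ∀ k : ℕ, ∫⁻ r in Ioc (σ * a (k+1)) (σ * a k), f r
      ≤ ENNReal.ofReal (K * (P k - P (k+1))) := by
    intro k
    have ha1 : 0 < a (k+1) := ha_pos (k+1)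
    have ha0 : 0 < a k := ha_pos k
    have hA : 0 < σ * a (k+1) := mul_pos hσ ha1
    have hB : 0 < σ * a k := mul_pos hσ ha0
    have hGA : 0 ≤ g (σ * a k) / (σ * a (k+1)) ^ (1 + q) :=
      div_nonneg (hg_pos _ hB).le (Real.rpow_pos_of_pos hA _).le
    calc ∫⁻ r in Ioc (σ * a (k+1)) (σ * a k), f r
        ≤ ∫⁻ _ in Ioc (σ * a (k+1)) (σ * a k),
            ENNReal.ofReal (g (σ * a k) / (σ * a (k+1)) ^ (1 + q)) := by
          refine setLIntegral_mono' measurableSet_Ioc (fun r hr => ?_)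
          refine ENNReal.ofReal_le_ofReal ?_
          have hr0 : 0 < r := lt_trans hA hr.1
          refine div_le_div₀ (hg_pos _ hB).le
            (hg_mono hr0.le hB.le hr.2)
            (Real.rpow_pos_of_pos hA _)
            (Real.rpow_le_rpow hA.le hr.1.le (by linarith))
      _ = ENNReal.ofReal (g (σ * a k) / (σ * a (k+1)) ^ (1 + q))
            * volume (Ioc (σ * a (k+1)) (σ * a k)) := setLIntegral_const _ _
      _ ≤ ENNReal.ofReal (g (σ * a k) / (σ * a (k+1)) ^ (1 + q))
            * ENNReal.ofReal (σ * a k) := by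
          rw [Real.volume_Ioc]
          exact mul_le_mul_right (ENNReal.ofReal_le_ofReal (by linarith)) _
      _ = ENNReal.ofReal (g (σ * a k) / (σ * a (k+1)) ^ (1 + q) * (σ * a k)) :=
          (ENNReal.ofReal_mul hGA).symm
      _ ≤ ENNReal.ofReal (K * (P k - P (k+1))) :=
          ENNReal.ofReal_le_ofReal (hreal k)
  -- sum the pieces
  have hsum : ∑' k : ℕ, ENNReal.ofReal (K * (P k - P (k+1)))
      ≤ ENNReal.ofReal (K * P 0) := by
    refine ENNReal.tsum_le_of_sum_range_le (fun N => ?_)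
    have hnn : ∀ i ∈ Finset.range N, 0 ≤ K * (P i - P (i+1)) :=
      fun i _ => mul_nonneg hK0 (by linarith [hP_anti i])
    rw [← ENNReal.ofReal_sum_of_nonneg hnn]
    refine ENNReal.ofReal_le_ofReal ?_
    rw [← Finset.mul_sum, Finset.sum_range_sub' P N]
    have := hP_nonneg N
    nlinarith [hP_nonneg 0]
  -- put everything together
  have hq_goal : 1 + (n : ℝ) / ((n : ℝ) - (m : ℝ)) = 1 + q := rfl
  calc ∫⁻ r in Ioo (0:ℝ) 1, ENNReal.ofReal (g r / r ^ (1 + (n : ℝ) / ((n : ℝ) - (m : ℝ))))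
      = ∫⁻ r in Ioo (0:ℝ) 1, f r := rfl
    _ ≤ ∫⁻ r in (⋃ k : ℕ, Ioc (σ * a (k+1)) (σ * a k)) ∪ Ico δ 1, f r :=
        lintegral_mono_set hcover
    _ ≤ (∫⁻ r in ⋃ k : ℕ, Ioc (σ * a (k+1)) (σ * a k), f r) + ∫⁻ r in Ico δ 1, f r :=
        lintegral_union_le _ _ _
    _ ≤ (∑' k : ℕ, ∫⁻ r in Ioc (σ * a (k+1)) (σ * a k), f r) + ∫⁻ r in Ico δ 1, f r := by
        gcongr
        exact lintegral_iUnion_le _ _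
    _ ≤ ENNReal.ofReal (K * P 0)
          + ENNReal.ofReal (g 1 / δ ^ (1 + q)) * volume (Ico δ 1) :=
        add_le_add (le_trans (ENNReal.tsum_le_tsum hpiece) hsum) houter
    _ < ⊤ := by
        refine ENNReal.add_lt_top.mpr ⟨ENNReal.ofReal_lt_top, ?_⟩
        exact ENNReal.mul_lt_top ENNReal.ofReal_lt_top measure_Ico_lt_top
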